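/- Let Q ⊆ L with L quasireal. Then L is a repeated radical extension of Q if and only if there is a tower of fields Q = L_0 ⊆ L_1 ⊆ ... ⊆ L_m = L such that each extension L_{i-1} ⊆ L_i is a radical extension of prime degree. -/

import Mathlib

/-- A field is quasireal if it has characteristic zero and its only roots of
unity are `±1`. -/
def IsQuasireal (L : Type*) [Field L] : Prop :=
  CharZero L ∧ ∀ ζ : L, (∃ n : ℕ, 0 < n ∧ ζ ^ n = 1) → ζ = 1 ∨ ζ = -1

/-- `B = A[α]` for some `α` with a positive power of `α` in `A`
(a single radical step, inside a fixed ambient extension `E` of `Q`). -/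
def RadicalStep (Q E : Type*) [Field Q] [Field E] [Algebra Q E]
    (A B : IntermediateField Q E) : Prop :=
  ∃ α : E, (∃ n : ℕ, 0 < n ∧ α ^ n ∈ A) ∧ B = A ⊔ IntermediateField.adjoin Q {α}

/-- `B` is obtained from `A` by a finite tower of radical extensions. -/
def IsRepeatedRadical (Q E : Type*) [Field Q] [Field E] [Algebra Q E]
    (A B : IntermediateField Q E) : Prop :=
  Relation.ReflTransGen (RadicalStep Q E) A B

section Aux

variable (Q L : Type*) [Field Q] [Field L] [Algebra Q L]

/-- The prime-degree radical step relation. -/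
private def PR (A B : IntermediateField Q L) : Prop :=
  RadicalStep Q L A B ∧
    ∃ h : A ≤ B, (Module.finrank A (IntermediateField.extendScalars h)).Prime

variable {Q L}

private lemma prime_step (hLqr : IsQuasireal L) (A : IntermediateField Q L)
    {p : ℕ} (hp : p.Prime) {α : L} (hα : α ^ p ∈ A) :
    Relation.ReflTransGen (PR Q L) A (A ⊔ IntermediateField.adjoin Q {α}) := by
  by_cases hmem : α ∈ A
  · have : IntermediateField.adjoin Q {α} ≤ A :=
      IntermediateField.adjoin_simple_le_iff.2 hmem
    rw [sup_eq_left.2 this]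
  · -- nontrivial step of degree exactly p
    set B := A ⊔ IntermediateField.adjoin Q {α} with hB
    have hAB : A ≤ B := le_sup_left
    set c : A := ⟨α ^ p, hα⟩ with hc
    have hirr : Irreducible (Polynomial.X ^ p - Polynomial.C c) := by
      apply X_pow_sub_C_irreducible_of_prime hp
      intro b hb
      apply hmem
      have hbL : (b : L) ^ p = α ^ p := by
        have := congrArg (Subtype.val) hb
        push_cast at this
        simpa using this
      have hb0 : (b : L) ≠ 0 := by
        intro h0
        have : α ^ p = 0 := by rw [← hbL, h0, zero_pow hp.ne_zero]
        have : α = 0 := pow_eq_zero_iff hp.ne_zero |>.1 this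
        exact hmem (this ▸ A.zero_mem)
      have hζ : (α / (b : L)) ^ p = 1 := by
        rw [div_pow, ← hbL, div_self (pow_ne_zero _ hb0)]
      rcases hLqr.2 _ ⟨p, hp.pos, hζ⟩ with h1 | h1
      · have : α = (b : L) := by field_simp at h1; exact h1
        exact this ▸ b.2
      · have : α = -(b : L) := by
          field_simp at h1
          linear_combination h1
        exact this ▸ A.neg_mem b.2
    have hint : IsIntegral A α := by
      refine ⟨Polynomial.X ^ p - Polynomial.C c, ?_, ?_⟩
      · exact Polynomial.monic_X_pow_sub_C _ hp.ne_zero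
      · simp [Polynomial.eval₂_sub, Polynomial.eval₂_pow, hc, sub_eq_zero]
    have hmin : minpoly A α = Polynomial.X ^ p - Polynomial.C c := by
      refine (minpoly.eq_of_irreducible_of_monic hirr ?_
        (Polynomial.monic_X_pow_sub_C _ hp.ne_zero)).symm
      simp [Polynomial.aeval_def, Polynomial.eval₂_sub, Polynomial.eval₂_pow, hc, sub_eq_zero]
    refine Relation.ReflTransGen.single ⟨⟨α, ⟨p, hp.pos, hα⟩, rfl⟩, hAB, ?_⟩
    have hext : IntermediateField.extendScalars hAB = IntermediateField.adjoin A {α} := by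
      apply IntermediateField.restrictScalars_injective Q
      rw [IntermediateField.extendScalars_restrictScalars,
        IntermediateField.restrictScalars_adjoin_eq_sup]
    rw [hext]
    have := IntermediateField.adjoin.finrank hint
    rw [this, hmin]
    simpa [Polynomial.natDegree_X_pow_sub_C] using hp

private lemma radical_refine (hLqr : IsQuasireal L) (A : IntermediateField Q L)
    {n : ℕ} (hn : 0 < n) {α : L} (hα : α ^ n ∈ A) :
    Relation.ReflTransGen (PR Q L) A (A ⊔ IntermediateField.adjoin Q {α}) := by
  induction n using Nat.strong_induction_on generalizing A α with
  | _ n ih =>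
    rcases eq_or_ne n 1 with rfl | hn1
    · rw [pow_one] at hα
      rw [sup_eq_left.2 (IntermediateField.adjoin_simple_le_iff.2 hα)]
    · obtain ⟨p, hp, hdvd⟩ := Nat.exists_prime_and_dvd hn1
      obtain ⟨m, rfl⟩ := hdvd
      have hm' : 0 < m := Nat.pos_of_ne_zero (by rintro rfl; simp at hn)
      have hmlt : m < p * m := by
        calc m = 1 * m := (one_mul m).symm
        _ < p * m := (Nat.mul_lt_mul_right hm').mpr hp.one_lt
      have hγ : (α ^ p) ^ m ∈ A := by rw [← pow_mul]; exact hα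
      have h1 := ih m hmlt A hm' hγ
      set A₁ := A ⊔ IntermediateField.adjoin Q {α ^ p} with hA₁
      have hγA₁ : α ^ p ∈ A₁ :=
        (le_sup_right : IntermediateField.adjoin Q {α ^ p} ≤ A₁)
          (IntermediateField.mem_adjoin_simple_self Q (α ^ p))
      have h2 := prime_step hLqr A₁ hp hγA₁
      have heq : A₁ ⊔ IntermediateField.adjoin Q {α} = A ⊔ IntermediateField.adjoin Q {α} := by
        rw [hA₁, sup_assoc]
        congr 1
        rw [sup_eq_right]
        exact IntermediateField.adjoin_simple_le_iff.2
          (pow_mem (IntermediateField.mem_adjoin_simple_self Q α) p)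
      rw [heq] at h2
      exact h1.trans h2

end Aux

/-- If `L` is quasireal, then `L` is a repeated radical extension of `Q` if and
only if there is a tower of fields from `Q` up to `L` each step of which is a
radical extension of prime degree. -/
theorem stmt13 (Q L : Type*) [Field Q] [Field L] [Algebra Q L]
    (hLqr : IsQuasireal L) :
    IsRepeatedRadical Q L ⊥ ⊤ ↔
      Relation.ReflTransGen
        (fun A B : IntermediateField Q L => RadicalStep Q L A B ∧
          ∃ h : A ≤ B,
            (Module.finrank A (IntermediateField.extendScalars h)).Prime)
        ⊥ ⊤ := by
  have key : ∀ A B : IntermediateField Q L, Relation.ReflTransGen (RadicalStep Q L) A B →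
      Relation.ReflTransGen (PR Q L) A B := by
    intro A B h
    induction h with
    | refl => exact Relation.ReflTransGen.refl
    | tail _ hstep ih =>
      obtain ⟨α, ⟨n, hn, hα⟩, rfl⟩ := hstep
      exact ih.trans (radical_refine hLqr _ hn hα)
  constructor
  · intro h
    exact key _ _ h
  · intro h
    exact Relation.ReflTransGen.mono (fun A B hAB => hAB.1) _ _ h
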